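/- Let K be a compact convex subset of ℝ^N and let μ be a Steffensen-Popoviciu measure on K, i.e., a real (signed) Borel measure with μ(K) > 0 such that ∫_K g dμ ≥ 0 for every continuous convex function g : K → [0,∞). Then the barycenter b_μ = (1/μ(K)) ∫_K x dμ(x) belongs to K, and for every continuous convex function f : K → ℝ one has f(b_μ) ≤ (1/μ(K)) ∫_K f(x) dμ(x). -/

import Mathlib

open MeasureTheory

lemma sp_integral_eval {N : ℕ} {K : Set (EuclideanSpace ℝ (Fin N))}
    (hK : IsCompact K) (μ : Measure (EuclideanSpace ℝ (Fin N))) [IsFiniteMeasure μ]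
    {f : EuclideanSpace ℝ (Fin N) → ℝ} (hf : ContinuousOn f K)
    (ℓ : EuclideanSpace ℝ (Fin N) →L[ℝ] ℝ) (c r : ℝ) :
    ∫ x in K, (c - ℓ x + r * f x) ∂μ
      = (μ K).toReal * c - ℓ (∫ x in K, x ∂μ) + r * ∫ x in K, f x ∂μ := by
  have h1 : IntegrableOn (fun x => x) K μ := continuousOn_id.integrableOn_compact hK
  have h2 : IntegrableOn f K μ := hf.integrableOn_compact hK
  have hℓ : Integrable (fun x => ℓ x) (μ.restrict K) := ℓ.integrable_comp h1
  have hc : Integrable (fun _ => c) (μ.restrict K) := integrable_const c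
  have hcl : Integrable (fun x => c - ℓ x) (μ.restrict K) := hc.sub hℓ
  rw [integral_add hcl (h2.const_mul r), integral_sub hc hℓ, integral_const,
    MeasureTheory.integral_const_mul, ℓ.integral_comp_comm h1]
  simp [Measure.restrict_apply_univ, smul_eq_mul, measureReal_restrict_apply_univ, Measure.real]

lemma sp_key {N : ℕ} {K : Set (EuclideanSpace ℝ (Fin N))}
    (hK_compact : IsCompact K) (hK_convex : Convex ℝ K)
    (μ₁ μ₂ : Measure (EuclideanSpace ℝ (Fin N)))
    [IsFiniteMeasure μ₁] [IsFiniteMeasure μ₂]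
    (hSP : ∀ g : EuclideanSpace ℝ (Fin N) → ℝ, ContinuousOn g K →
      ConvexOn ℝ K g → (∀ x ∈ K, 0 ≤ g x) →
      0 ≤ (∫ x in K, g x ∂μ₁) - ∫ x in K, g x ∂μ₂)
    {f : EuclideanSpace ℝ (Fin N) → ℝ} (hfc : ContinuousOn f K)
    (hconv : ConvexOn ℝ K f) (ℓ : EuclideanSpace ℝ (Fin N) →L[ℝ] ℝ) (c r : ℝ)
    (hr : 0 ≤ r) (hpos : ∀ x ∈ K, 0 ≤ c - ℓ x + r * f x) :
    0 ≤ ((μ₁ K).toReal - (μ₂ K).toReal) * c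
        - ℓ ((∫ x in K, x ∂μ₁) - ∫ x in K, x ∂μ₂)
        + r * ((∫ x in K, f x ∂μ₁) - ∫ x in K, f x ∂μ₂) := by
  have haff : ConvexOn ℝ K (fun x => c - ℓ x) := by
    have h1 := (convexOn_const c hK_convex).add ((-ℓ).toLinearMap.convexOn hK_convex)
    have h2 : (fun x => c - ℓ x) = (fun x => c) + ⇑(-ℓ).toLinearMap := by
      ext x
      simp [sub_eq_add_neg]
    rw [h2]
    exact h1
  have hrf : ConvexOn ℝ K (fun x => r * f x) := by
    simpa [smul_eq_mul] using hconv.smul hr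
  have hg : ConvexOn ℝ K (fun x => c - ℓ x + r * f x) := haff.add hrf
  have hgc : ContinuousOn (fun x => c - ℓ x + r * f x) K :=
    ((continuous_const.sub ℓ.continuous).continuousOn).add (continuousOn_const.mul hfc)
  have h := hSP _ hgc hg hpos
  rw [sp_integral_eval hK_compact μ₁ hfc ℓ c r, sp_integral_eval hK_compact μ₂ hfc ℓ c r] at h
  rw [map_sub]
  linarith

/-- Theorem 2: if `μ = μ₁ − μ₂` is a Steffensen–Popoviciu measure on a compact
convex set `K ⊆ ℝ^N`, then its barycenter `b_μ = (1/μ(K)) ∫_K x dμ` belongs to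
`K` and Jensen's inequality `f(b_μ) ≤ (1/μ(K)) ∫_K f dμ` holds for every
continuous convex function `f : K → ℝ`. The signed measure is represented as the
difference of two finite Borel measures carried by `K`. -/
theorem jensen_steffensen_popoviciu
    (N : ℕ) (K : Set (EuclideanSpace ℝ (Fin N)))
    (hK_compact : IsCompact K) (hK_convex : Convex ℝ K)
    (μ₁ μ₂ : Measure (EuclideanSpace ℝ (Fin N)))
    [IsFiniteMeasure μ₁] [IsFiniteMeasure μ₂]
    (hμ₁ : μ₁ Kᶜ = 0) (hμ₂ : μ₂ Kᶜ = 0)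
    (hmass : 0 < (μ₁ K).toReal - (μ₂ K).toReal)
    (hSP : ∀ g : EuclideanSpace ℝ (Fin N) → ℝ, ContinuousOn g K →
      ConvexOn ℝ K g → (∀ x ∈ K, 0 ≤ g x) →
      0 ≤ (∫ x in K, g x ∂μ₁) - ∫ x in K, g x ∂μ₂) :
    (((μ₁ K).toReal - (μ₂ K).toReal)⁻¹ •
        ((∫ x in K, x ∂μ₁) - ∫ x in K, x ∂μ₂)) ∈ K ∧
      ∀ f : EuclideanSpace ℝ (Fin N) → ℝ, ContinuousOn f K → ConvexOn ℝ K f →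
        f (((μ₁ K).toReal - (μ₂ K).toReal)⁻¹ •
            ((∫ x in K, x ∂μ₁) - ∫ x in K, x ∂μ₂)) ≤
          ((μ₁ K).toReal - (μ₂ K).toReal)⁻¹ *
            ((∫ x in K, f x ∂μ₁) - ∫ x in K, f x ∂μ₂) := by
  set t : ℝ := (μ₁ K).toReal - (μ₂ K).toReal with ht_def
  set I : EuclideanSpace ℝ (Fin N) := (∫ x in K, x ∂μ₁) - ∫ x in K, x ∂μ₂ with hI_def
  set b : EuclideanSpace ℝ (Fin N) := t⁻¹ • I with hb_def
  have ht : 0 < t := hmass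
  -- Part 1: the barycenter belongs to K
  have hbK : b ∈ K := by
    by_contra hb
    obtain ⟨ℓ, u, hlt, hgt⟩ :=
      geometric_hahn_banach_closed_point hK_convex hK_compact.isClosed hb
    have hkey := sp_key hK_compact hK_convex μ₁ μ₂ hSP
      (f := fun _ => (0 : ℝ)) continuousOn_const (convexOn_const 0 hK_convex) ℓ u 0
      le_rfl (fun x hx => by simpa using (hlt x hx).le)
    simp only [mul_zero, zero_mul, add_zero, sub_zero, ← ht_def, ← hI_def] at hkey
    -- hkey : 0 ≤ t * u - ℓ I
    have hlb : ℓ b = t⁻¹ * ℓ I := by rw [hb_def, ℓ.map_smul, smul_eq_mul]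
    have h1 : t⁻¹ * ℓ I ≤ t⁻¹ * (t * u) := by
      apply mul_le_mul_of_nonneg_left _ (inv_nonneg.2 ht.le)
      linarith
    rw [inv_mul_cancel_left₀ ht.ne'] at h1
    rw [hlb] at hgt
    linarith
  refine ⟨hbK, fun f hfc hconv => ?_⟩
  -- Part 2: Jensen's inequality
  set F : ℝ := (∫ x in K, f x ∂μ₁) - ∫ x in K, f x ∂μ₂ with hF_def
  by_contra hcon
  push_neg at hcon
  -- hcon : t⁻¹ * F < f b
  set Epi : Set ((EuclideanSpace ℝ (Fin N)) × ℝ) := {p | p.1 ∈ K ∧ f p.1 ≤ p.2}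
    with hEpi_def
  have hEpi_convex : Convex ℝ Epi := hconv.convex_epigraph
  have hEpi_closed : IsClosed Epi := by
    have h1 : ContinuousOn (fun p : (EuclideanSpace ℝ (Fin N)) × ℝ => f p.1 - p.2)
        (K ×ˢ Set.univ) := by
      apply ContinuousOn.sub _ continuous_snd.continuousOn
      exact hfc.comp continuous_fst.continuousOn (fun p hp => hp.1)
    have h2 := h1.preimage_isClosed_of_isClosed
      (hK_compact.isClosed.prod isClosed_univ) isClosed_Iic (t := Set.Iic (0:ℝ))
    convert h2 using 1
    ext p
    simp [hEpi_def, sub_nonpos]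
  have hp0 : ((b, t⁻¹ * F) : (EuclideanSpace ℝ (Fin N)) × ℝ) ∉ Epi := by
    rintro ⟨-, h2⟩
    exact absurd h2 (not_le.2 hcon)
  obtain ⟨L, u, hlt, hgt⟩ :=
    geometric_hahn_banach_closed_point hEpi_convex hEpi_closed hp0
  set ℓ : EuclideanSpace ℝ (Fin N) →L[ℝ] ℝ :=
    L.comp (ContinuousLinearMap.inl ℝ (EuclideanSpace ℝ (Fin N)) ℝ) with hℓ_def
  set s : ℝ := L (0, 1) with hs_def
  have hdecomp : ∀ (x : EuclideanSpace ℝ (Fin N)) (y : ℝ), L (x, y) = ℓ x + y * s := by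
    intro x y
    have hxy : ((x, y) : (EuclideanSpace ℝ (Fin N)) × ℝ)
        = (x, 0) + y • ((0 : EuclideanSpace ℝ (Fin N)), (1 : ℝ)) := by
      simp [Prod.ext_iff]
    rw [hxy, map_add, L.map_smul, smul_eq_mul, hℓ_def, hs_def]
    simp [ContinuousLinearMap.inl]
  have hs_nonpos : s ≤ 0 := by
    by_contra hs
    push_neg at hs
    set y : ℝ := max (f b) ((u - ℓ b) / s) with hy_def
    have hmem : ((b, y) : (EuclideanSpace ℝ (Fin N)) × ℝ) ∈ Epi := ⟨hbK, le_max_left _ _⟩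
    have h1 := hlt _ hmem
    rw [hdecomp b y] at h1
    have h2 : (u - ℓ b) / s ≤ y := le_max_right _ _
    rw [div_le_iff₀ hs] at h2
    linarith
  have hs_neg : s < 0 := by
    rcases lt_or_eq_of_le hs_nonpos with h | h
    · exact h
    · exfalso
      have h1 := hlt (b, f b) ⟨hbK, le_rfl⟩
      rw [hdecomp b (f b), h, mul_zero, add_zero] at h1
      rw [hdecomp b (t⁻¹ * F), h, mul_zero, add_zero] at hgt
      linarith
  have hkey := sp_key hK_compact hK_convex μ₁ μ₂ hSP hfc hconv ℓ u (-s)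
    (by linarith) (fun x hx => by
      have h1 := hlt (x, f x) ⟨hx, le_rfl⟩
      rw [hdecomp x (f x)] at h1
      nlinarith)
  rw [← ht_def, ← hI_def, ← hF_def] at hkey
  -- hkey : 0 ≤ t * u - ℓ I + (-s) * F
  rw [hdecomp b (t⁻¹ * F)] at hgt
  have hlb : ℓ b = t⁻¹ * ℓ I := by rw [hb_def, ℓ.map_smul, smul_eq_mul]
  rw [hlb] at hgt
  -- hgt : u < t⁻¹ * ℓ I + t⁻¹ * F * s
  have h1 : t⁻¹ * (ℓ I + s * F) ≤ t⁻¹ * (t * u) := by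
    apply mul_le_mul_of_nonneg_left _ (inv_nonneg.2 ht.le)
    linarith
  rw [inv_mul_cancel_left₀ ht.ne'] at h1
  rw [mul_add] at h1
  nlinarith
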